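/- Let n ≥ 1, m, k ∈ ℤ, ε = ±1, α ∈ {1,…,n−1}, and let q : ℝ → ℝ^n be a smooth curve with q_n(x) ≠ 0 for all x. Then for every i ∈ {α+1,…,n} the Euler–Lagrange expressions satisfy E_i(L^{n,m,k})[q] = E_{i−α}(L^{n,m+α,k−α})[q] pointwise; equivalently, E_i(L^{n,m,k})[q] = E_{i+α}(L^{n,m−α,k+α})[q] for i = 1,…,n−α. -/

import Mathlib

noncomputable section

/-- Benenti potentials `V_i^{(k)}` for `k ≥ 0`: `Vpos n q k i = V_i^{(k)}(q)` (`i` 1-based),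
with `V_i^{(0)} = δ_{i n}` and `V_i^{(k+1)} = V_{i+1}^{(k)} - q_i V_1^{(k)}`, `V_{n+1}^{(k)} := 0`. -/
def Vpos (n : ℕ) (q : ℕ → ℝ) : ℕ → ℕ → ℝ
  | 0, i => if i = n then 1 else 0
  | k + 1, i => (if i = n then 0 else Vpos n q k (i + 1)) - q i * Vpos n q k 1

/-- Benenti potentials for negative superscripts: `Vneg n q j r = V_r^{(-j)}(q)`, via the
backward recursion `V_r^{(k)} = V_{r-1}^{(k+1)} - (q_{r-1}/q_n) V_n^{(k+1)}`, with
`V_0 := 0` and `q_0 := 1`. -/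
def Vneg (n : ℕ) (q : ℕ → ℝ) : ℕ → ℕ → ℝ
  | 0, r => if r = n then 1 else 0
  | j + 1, r =>
      (if r = 1 then 0 else Vneg n q j (r - 1)) -
        (if r = 1 then 1 else q (r - 1)) / q n * Vneg n q j n

/-- Benenti potential `V_i^{(k)}(q)` for `k : ℤ`, `i` 1-based. -/
def benenti (n : ℕ) (q : ℕ → ℝ) (k : ℤ) (i : ℕ) : ℝ :=
  if 0 ≤ k then Vpos n q k.toNat i else Vneg n q (-k).toNat i

/-- Reindex a vector of `ℝ^n` as a 1-based `ℕ`-indexed family (zero outside `1..n`). -/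
def extQ (n : ℕ) (Q : Fin n → ℝ) : ℕ → ℝ := fun a =>
  if h : 1 ≤ a ∧ a ≤ n then Q ⟨a - 1, by omega⟩ else 0

/-- The Stäckel Lagrangian `L^{n,m,k}(q,q_x) = ¼ ∑_{i,j} V_1^{(2n-m-i-j)}(q) q_{i,x} q_{j,x}
- (ε/4) V_1^{(k)}(q)` (indices 1-based). -/
def Lag (n : ℕ) (m k : ℤ) (ε : ℝ) (Q Qx : Fin n → ℝ) : ℝ :=
  (1 / 4) * ∑ i : Fin n, ∑ j : Fin n,
      benenti n (extQ n Q) (2 * (n : ℤ) - m - (((i : ℕ) : ℤ) + 1) - (((j : ℕ) : ℤ) + 1)) 1 *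
        Qx i * Qx j -
    ε / 4 * benenti n (extQ n Q) k 1

/-- Euler–Lagrange expression `E_i(L)[c](x) = (∂L/∂q_i)(c x, c_x x) - d/dx [(∂L/∂q_{i,x})(c x, c_x x)]`
along a curve `c : ℝ → ℝⁿ`. -/
def EL (n : ℕ) (L : (Fin n → ℝ) → (Fin n → ℝ) → ℝ) (c : ℝ → Fin n → ℝ) (i : Fin n)
    (x : ℝ) : ℝ :=
  fderiv ℝ (fun Q => L Q (deriv c x)) (c x) (Pi.single i 1) -
    deriv (fun y => fderiv ℝ (fun V => L (c y) V) (deriv c y) (Pi.single i 1)) x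

-- forward recursion for s ≥ 0
lemma benenti_succ (n : ℕ) (q : ℕ → ℝ) (s : ℤ) (hs : 0 ≤ s) (i : ℕ) :
    benenti n q (s+1) i = (if i = n then 0 else benenti n q s (i+1)) - q i * benenti n q s 1 := by
  unfold benenti
  rw [if_pos (by omega : (0:ℤ) ≤ s + 1), if_pos hs, if_pos hs]
  have h : (s+1).toNat = s.toNat + 1 := by omega
  rw [h]
  simp [Vpos]

-- backward recursion for s ≤ 0 (needs n ≥ 2 for the s = 0 case)
lemma benenti_pred (n : ℕ) (hn : 2 ≤ n) (q : ℕ → ℝ) (s : ℤ) (hs : s ≤ 0) (r : ℕ) (hr : r ≤ n) :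
    benenti n q s r = (if r = 1 then 0 else benenti n q (s+1) (r-1)) -
      (if r = 1 then 1 else q (r-1)) / q n * benenti n q (s+1) n := by
  rcases eq_or_lt_of_le hs with h0 | hneg
  · subst h0
    unfold benenti
    norm_num [Vpos]
    split_ifs <;> first | ring1 | (exfalso; omega)
  · have h1 : ¬ (0:ℤ) ≤ s := by omega
    unfold benenti
    rw [if_neg h1]
    by_cases h2 : s = -1
    · subst h2
      norm_num [Vneg, Vpos]
    · have h3 : ¬ (0:ℤ) ≤ s + 1 := by omega
      rw [if_neg h3, if_neg h3]
      have h4 : (-s).toNat = (-(s+1)).toNat + 1 := by omega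
      rw [h4]
      simp [Vneg]

lemma benenti_n_succ (n : ℕ) (hn : 2 ≤ n) (q : ℕ → ℝ) (hq : q n ≠ 0) (s : ℤ) :
    benenti n q (s+1) n = - (q n * benenti n q s 1) := by
  rcases le_or_gt 0 s with hs | hs
  · rw [benenti_succ n q s hs n, if_pos rfl]; ring
  · have h := benenti_pred n hn q s (by omega) 1 (by omega)
    rw [if_pos rfl, if_pos rfl] at h
    field_simp at h
    linarith [h]

/-- the basic functions of `Q` -/
def F (n : ℕ) (s : ℤ) (i : ℕ) : (Fin n → ℝ) → ℝ := fun Q => benenti n (extQ n Q) s i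

/-- coordinate function, 1-based -/
def cf (n : ℕ) (a : ℕ) : (Fin n → ℝ) → ℝ := fun Q => extQ n Q a

/-- 1-based coordinate direction, `0` if out of range -/
def dir (n : ℕ) (j : ℕ) : Fin n → ℝ := fun t => if (t : ℕ) = j - 1 ∧ 1 ≤ j ∧ j ≤ n then 1 else 0

lemma cf_eq (n a : ℕ) (h1 : 1 ≤ a) (h2 : a ≤ n) :
    cf n a = fun Q => Q ⟨a - 1, by omega⟩ := by
  funext Q; simp [cf, extQ, h1, h2]

lemma cf_diff (n a : ℕ) : Differentiable ℝ (cf n a) := by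
  by_cases h : 1 ≤ a ∧ a ≤ n
  · rw [cf_eq n a h.1 h.2]
    exact fun Q => (differentiable_pi.mp differentiable_id _) Q
  · have : cf n a = fun _ => 0 := by funext Q; simp [cf, extQ, h]
    rw [this]; exact differentiable_const 0

lemma fderiv_cf (n a : ℕ) (h1 : 1 ≤ a) (h2 : a ≤ n) (Q : Fin n → ℝ) (j : ℕ)
    (hj1 : 1 ≤ j) (hj2 : j ≤ n) :
    fderiv ℝ (cf n a) Q (dir n j) = if a = j then 1 else 0 := by
  rw [cf_eq n a h1 h2]
  have : fderiv ℝ (fun Q : Fin n → ℝ => Q ⟨a - 1, by omega⟩) Q =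
      ContinuousLinearMap.proj (⟨a - 1, by omega⟩ : Fin n) := by
    exact (ContinuousLinearMap.proj (R := ℝ) (φ := fun _ : Fin n => ℝ)
      (⟨a - 1, by omega⟩ : Fin n)).hasFDerivAt.fderiv
  rw [this]
  simp only [ContinuousLinearMap.proj_apply, dir]
  by_cases h : a = j
  · subst h; simp [h1, h2, hj1, hj2]
  · rw [if_neg h, if_neg]
    intro hc
    exact h (by omega)

section toolkit
variable {n : ℕ} {f g : (Fin n → ℝ) → ℝ} {Q v : Fin n → ℝ}

lemma Dsub (hf : DifferentiableAt ℝ f Q) (hg : DifferentiableAt ℝ g Q) :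
    fderiv ℝ (fun Q => f Q - g Q) Q v = fderiv ℝ f Q v - fderiv ℝ g Q v := by
  rw [fderiv_fun_sub hf hg]; rfl

lemma Dmul (hf : DifferentiableAt ℝ f Q) (hg : DifferentiableAt ℝ g Q) :
    fderiv ℝ (fun Q => f Q * g Q) Q v
      = f Q * fderiv ℝ g Q v + g Q * fderiv ℝ f Q v := by
  rw [fderiv_fun_mul hf hg]; simp [smul_eq_mul]

lemma Dconst (c : ℝ) : fderiv ℝ (fun _ : Fin n → ℝ => c) Q v = 0 := by
  rw [fderiv_fun_const]; rfl

lemma Dconst_mul (hf : DifferentiableAt ℝ f Q) (c : ℝ) :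
    fderiv ℝ (fun Q => c * f Q) Q v = c * fderiv ℝ f Q v := by
  rw [fderiv_const_mul hf c]; simp [smul_eq_mul]

lemma Dmul_const (hf : DifferentiableAt ℝ f Q) (c : ℝ) :
    fderiv ℝ (fun Q => f Q * c) Q v = fderiv ℝ f Q v * c := by
  rw [fderiv_mul_const hf c]; simp [smul_eq_mul]; ring

lemma Dinv (hg : DifferentiableAt ℝ g Q) (h0 : g Q ≠ 0) :
    fderiv ℝ (fun Q => (g Q)⁻¹) Q v = - fderiv ℝ g Q v / (g Q)^2 := by
  have h := ((hasFDerivAt_inv' (𝕜 := ℝ) (R := ℝ) h0).comp Q hg.hasFDerivAt).fderiv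
  have e : (fun Q => (g Q)⁻¹) = (Inv.inv ∘ g) := rfl
  rw [e, h]
  simp only [ContinuousLinearMap.comp_apply, ContinuousLinearMap.neg_apply,
    ContinuousLinearMap.mulLeftRight_apply]
  rw [div_eq_mul_inv, pow_two, mul_inv]
  ring1

lemma Ddiv (hf : DifferentiableAt ℝ f Q) (hg : DifferentiableAt ℝ g Q) (h0 : g Q ≠ 0) :
    fderiv ℝ (fun Q => f Q / g Q) Q v
      = (fderiv ℝ f Q v * g Q - f Q * fderiv ℝ g Q v) / (g Q)^2 := by
  have e : (fun Q => f Q / g Q) = fun Q => f Q * (g Q)⁻¹ := by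
    funext y; rw [div_eq_mul_inv]
  rw [e, Dmul hf (hg.fun_inv h0), Dinv hg h0]
  field_simp
  ring

end toolkit

lemma cf_n_eq (n : ℕ) (hn : 1 ≤ n) (Q : Fin n → ℝ) :
    cf n n Q = Q ⟨n - 1, by omega⟩ := by
  rw [cf_eq n n hn le_rfl]

lemma diffVpos (n : ℕ) (k : ℕ) : ∀ i, Differentiable ℝ (fun Q => Vpos n (extQ n Q) k i) := by
  induction k with
  | zero => intro i; simp only [Vpos]; exact differentiable_const _
  | succ k ih =>
    intro i
    simp only [Vpos]
    apply Differentiable.sub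
    · by_cases h : i = n
      · simp only [h, if_pos rfl]; exact differentiable_const _
      · simp only [if_neg h]; exact ih (i+1)
    · exact (cf_diff n i).mul (ih 1)

lemma diffVneg (n : ℕ) (hn : 1 ≤ n) (j : ℕ) :
    ∀ r (Q : Fin n → ℝ), Q ⟨n - 1, by omega⟩ ≠ 0 →
      DifferentiableAt ℝ (fun Q => Vneg n (extQ n Q) j r) Q := by
  induction j with
  | zero => intro r Q h0; simp only [Vneg]; exact differentiableAt_const _
  | succ j ih =>
    intro r Q h0
    have hcf : cf n n Q ≠ 0 := by rw [cf_n_eq n hn]; exact h0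
    simp only [Vneg]
    apply DifferentiableAt.sub
    · by_cases h : r = 1
      · simp only [if_pos h]; exact differentiableAt_const _
      · simp only [if_neg h]; exact ih (r-1) Q h0
    · apply DifferentiableAt.mul _ (ih n Q h0)
      simp only [div_eq_mul_inv]
      apply DifferentiableAt.mul _ (((cf_diff n n) Q).inv hcf)
      by_cases h : r = 1
      · simp only [if_pos h]; exact differentiableAt_const _
      · simp only [if_neg h]; exact (cf_diff n (r-1)) Q

lemma diffF (n : ℕ) (hn : 1 ≤ n) (s : ℤ) (i : ℕ) (Q : Fin n → ℝ)
    (h0 : Q ⟨n - 1, by omega⟩ ≠ 0) : DifferentiableAt ℝ (F n s i) Q := by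
  unfold F benenti
  by_cases hs : 0 ≤ s
  · simp only [if_pos hs]; exact (diffVpos n s.toNat i) Q
  · simp only [if_neg hs]; exact diffVneg n hn (-s).toNat i Q h0

lemma F_succ (n : ℕ) (s : ℤ) (hs : 0 ≤ s) (i : ℕ) :
    F n (s+1) i = fun Q => (if i = n then 0 else F n s (i+1) Q) - cf n i Q * F n s 1 Q := by
  funext Q; exact benenti_succ n (extQ n Q) s hs i

lemma F_pred (n : ℕ) (hn : 2 ≤ n) (s : ℤ) (hs : s ≤ 0) (r : ℕ) (hr : r ≤ n) :
    F n s r = fun Q => (if r = 1 then 0 else F n (s+1) (r-1) Q) -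
      (if r = 1 then 1 else cf n (r-1) Q) / cf n n Q * F n (s+1) n Q := by
  funext Q
  have h := benenti_pred n hn (extQ n Q) s hs r hr
  by_cases h1 : r = 1 <;> simp only [if_pos, if_neg, h1] at h ⊢ <;> exact h

lemma diffF' (n : ℕ) (hn : 1 ≤ n) (s : ℤ) (i : ℕ) (Q : Fin n → ℝ) (h0 : cf n n Q ≠ 0) :
    DifferentiableAt ℝ (F n s i) Q := by
  exact diffF n hn s i Q (cf_n_eq n hn Q ▸ h0)

lemma F_zero (n : ℕ) (i : ℕ) : F n 0 i = fun _ => if i = n then (1:ℝ) else 0 := by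
  funext Q; unfold F benenti; simp [Vpos]

lemma F_one (n : ℕ) (hn : 2 ≤ n) (i : ℕ) :
    F n 1 i = fun _ => if i ≠ n ∧ i + 1 = n then (1:ℝ) else 0 := by
  funext Q
  unfold F benenti
  rw [if_pos (by norm_num)]
  have : (1:ℤ).toNat = 1 := rfl
  rw [this]
  simp only [Vpos, show ¬((1:ℕ) = n) by omega, if_neg, mul_zero, sub_zero]
  by_cases h : i = n <;> simp [h]

def MainStmt (n : ℕ) (s : ℤ) : Prop :=
  ∀ i j : ℕ, 1 ≤ i → i ≤ n → 2 ≤ j → j ≤ n → ∀ Q : Fin n → ℝ, cf n n Q ≠ 0 →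
    fderiv ℝ (F n s i) Q (dir n j)
      = fderiv ℝ (F n (s-1) i) Q (dir n (j-1)) - (if i = j then F n (s-1) 1 Q else 0)

lemma base1 (n : ℕ) (hn : 2 ≤ n) : MainStmt n 1 := by
  intro i j hi1 hi2 hj1 hj2 Q h0
  rw [F_one n hn i, Dconst, show (1:ℤ) - 1 = 0 by ring, F_zero n i, Dconst, F_zero n 1]
  simp [show ¬((1:ℕ) = n) by omega]

lemma base0 (n : ℕ) (hn : 2 ≤ n) : MainStmt n 0 := by
  intro i j hi1 hi2 hj1 hj2 Q h0
  have hn1 : (1:ℕ) ≤ n := by omega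
  have hdcf : ∀ a, DifferentiableAt ℝ (cf n a) Q := fun a => cf_diff n a Q
  have em1 : F n (-1) i = fun Q =>
      (0:ℝ) - ((if i = 1 then 1 else cf n (i-1) Q) / cf n n Q) * 1 := by
    rw [show (-1 : ℤ) = -1 from rfl, F_pred n hn (-1) (by norm_num) i hi2]
    funext Q
    rw [show (-1 : ℤ) + 1 = 0 by ring, F_zero, F_zero]
    rw [if_neg (show ¬(i - 1 = n) by omega), if_pos rfl]
    by_cases h1 : i = 1 <;> simp [h1]
  have em1' : F n (-1) 1 Q = (0:ℝ) - (1 / cf n n Q) * 1 := by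
    have h := F_pred n hn (-1) (by norm_num) 1 hn1
    rw [show (-1 : ℤ) + 1 = 0 by ring] at h
    rw [h]
    simp [F_zero]
  have hnum : DifferentiableAt ℝ (fun Q : Fin n → ℝ => if i = 1 then (1:ℝ) else cf n (i-1) Q) Q := by
    by_cases h1 : i = 1 <;> simp only [h1, if_pos, if_neg, if_true, if_false]
    · exact differentiableAt_const _
    · exact hdcf _
  have hdivd : DifferentiableAt ℝ
      (fun Q : Fin n → ℝ => (if i = 1 then (1:ℝ) else cf n (i-1) Q) / cf n n Q) Q := by
    simp only [div_eq_mul_inv]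
    exact hnum.mul ((hdcf n).inv h0)
  rw [show (0:ℤ) - 1 = -1 by ring, F_zero n i, Dconst, em1, em1']
  rw [Dsub (differentiableAt_const 0) (hdivd.mul_const 1), Dconst,
    Dmul_const hdivd 1, Ddiv hnum (hdcf n) h0]
  have hdn : fderiv ℝ (cf n n) Q (dir n (j-1)) = 0 := by
    rw [fderiv_cf n n hn1 le_rfl Q (j-1) (by omega) (by omega)]
    rw [if_neg (by omega)]
  rw [hdn]
  have hnumd : fderiv ℝ (fun Q : Fin n → ℝ => if i = 1 then (1:ℝ) else cf n (i-1) Q) Q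
      (dir n (j-1)) = if i = j then 1 else 0 := by
    by_cases h1 : i = 1
    · simp only [h1, if_true]
      rw [Dconst, if_neg (by omega)]
    · simp only [h1, if_false]
      rw [fderiv_cf n (i-1) (by omega) (by omega) Q (j-1) (by omega) (by omega)]
      by_cases hij : i = j
      · rw [if_pos (by omega), if_pos hij]
      · rw [if_neg (by omega), if_neg hij]
  rw [hnumd]
  by_cases hij : i = j
  · rw [if_pos hij, if_pos hij]
    field_simp
    ring1
  · rw [if_neg hij, if_neg hij]
    ring

lemma stepPos (n : ℕ) (hn : 2 ≤ n) (s : ℤ) (hs : 1 ≤ s) (IH : MainStmt n s) :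
    MainStmt n (s+1) := by
  intro i j hi1 hi2 hj1 hj2 Q h0
  have hn1 : (1:ℕ) ≤ n := by omega
  have hdF : ∀ (t : ℤ) (i' : ℕ), DifferentiableAt ℝ (F n t i') Q :=
    fun t i' => diffF' n hn1 t i' Q h0
  have hdcf : ∀ a, DifferentiableAt ℝ (cf n a) Q := fun a => cf_diff n a Q
  have e2 : F n s i = fun Q => (if i = n then 0 else F n (s-1) (i+1) Q) -
      cf n i Q * F n (s-1) 1 Q := by
    have h := F_succ n (s-1) (by omega) i
    rw [show s - 1 + 1 = s by ring] at h
    exact h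
  rw [show s + 1 - 1 = s by ring]
  have hIH1 : fderiv ℝ (F n s 1) Q (dir n j)
      = fderiv ℝ (F n (s-1) 1) Q (dir n (j-1)) := by
    have h := IH 1 j le_rfl hn1 hj1 hj2 Q h0
    rw [if_neg (by omega)] at h
    simpa using h
  have hcfi : fderiv ℝ (cf n i) Q (dir n j) = if i = j then 1 else 0 :=
    fderiv_cf n i hi1 hi2 Q j (by omega) hj2
  have hcfi' : fderiv ℝ (cf n i) Q (dir n (j-1)) = if i = j - 1 then 1 else 0 :=
    fderiv_cf n i hi1 hi2 Q (j-1) (by omega) (by omega)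
  by_cases hin : i = n
  · rw [F_succ n s (by omega) i, e2]
    simp only [if_pos hin]
    rw [Dsub (differentiableAt_const 0) ((hdcf i).fun_mul (hdF s 1)), Dconst,
      Dmul (hdcf i) (hdF s 1),
      Dsub (differentiableAt_const 0) ((hdcf i).fun_mul (hdF (s-1) 1)), Dconst,
      Dmul (hdcf i) (hdF (s-1) 1), hIH1, hcfi, hcfi']
    rw [if_neg (show ¬ i = j - 1 by omega)]
    by_cases hnj : i = j
    · rw [if_pos hnj, if_pos hnj]
      ring1
    · rw [if_neg hnj, if_neg hnj]
      ring1
  · rw [F_succ n s (by omega) i, e2]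
    simp only [if_neg hin]
    rw [Dsub (hdF s (i+1)) ((hdcf i).fun_mul (hdF s 1)),
      Dmul (hdcf i) (hdF s 1),
      Dsub (hdF (s-1) (i+1)) ((hdcf i).fun_mul (hdF (s-1) 1)),
      Dmul (hdcf i) (hdF (s-1) 1), hIH1, hcfi, hcfi']
    have hIH2 : fderiv ℝ (F n s (i+1)) Q (dir n j)
        = fderiv ℝ (F n (s-1) (i+1)) Q (dir n (j-1))
          - (if i + 1 = j then F n (s-1) 1 Q else 0) :=
      IH (i+1) j (by omega) (by omega) hj1 hj2 Q h0
    rw [hIH2]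
    by_cases hij : i = j
    · rw [if_pos hij, if_pos hij, if_neg (by omega : ¬ i = j - 1),
        if_neg (by omega : ¬ i + 1 = j)]
      ring1
    · rw [if_neg hij, if_neg hij]
      by_cases hij1 : i = j - 1
      · rw [if_pos hij1, if_pos (by omega : i + 1 = j)]
        ring1
      · rw [if_neg hij1, if_neg (by omega : ¬ i + 1 = j)]
        ring1

lemma stepNeg (n : ℕ) (hn : 2 ≤ n) (s : ℤ) (hs : s ≤ 0) (IH : MainStmt n (s+1)) :
    MainStmt n s := by
  intro i j hi1 hi2 hj1 hj2 Q h0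
  have hn1 : (1:ℕ) ≤ n := by omega
  have hdF : ∀ (t : ℤ) (i' : ℕ), DifferentiableAt ℝ (F n t i') Q :=
    fun t i' => diffF' n hn1 t i' Q h0
  have hdcf : ∀ a, DifferentiableAt ℝ (cf n a) Q := fun a => cf_diff n a Q
  have vA : F n (s+1) n Q = -(cf n n Q * F n s 1 Q) :=
    benenti_n_succ n hn (extQ n Q) h0 s
  have hcfn_j : fderiv ℝ (cf n n) Q (dir n j) = if n = j then 1 else 0 :=
    fderiv_cf n n hn1 le_rfl Q j (by omega) hj2
  have hcfn_j' : fderiv ℝ (cf n n) Q (dir n (j-1)) = 0 := by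
    rw [fderiv_cf n n hn1 le_rfl Q (j-1) (by omega) (by omega), if_neg (by omega)]
  have es1' : F n (s-1) 1 = fun Q => (0:ℝ) - 1 / cf n n Q * F n s n Q := by
    have h := F_pred n hn (s-1) (by omega) 1 hn1
    rw [show s - 1 + 1 = s by ring] at h
    rw [h]
    funext Q; simp
  by_cases hi : i = 1
  · subst hi
    have es : F n s 1 = fun Q => (0:ℝ) - 1 / cf n n Q * F n (s+1) n Q := by
      have h := F_pred n hn s hs 1 hn1
      rw [h]; funext Q; simp
    have hdiv : DifferentiableAt ℝ (fun Q : Fin n → ℝ => (1:ℝ) / cf n n Q) Q := by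
      simp only [div_eq_mul_inv]
      exact (differentiableAt_const 1).mul ((hdcf n).inv h0)
    rw [es, es1']
    rw [Dsub (differentiableAt_const 0) (hdiv.fun_mul (hdF (s+1) n)), Dconst,
      Dmul hdiv (hdF (s+1) n),
      Dsub (differentiableAt_const 0) (hdiv.fun_mul (hdF s n)), Dconst,
      Dmul hdiv (hdF s n),
      Ddiv (differentiableAt_const 1) (hdcf n) h0,
      Ddiv (differentiableAt_const 1) (hdcf n) h0,
      Dconst, Dconst, hcfn_j, hcfn_j']
    have hIHn : fderiv ℝ (F n (s+1) n) Q (dir n j)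
        = fderiv ℝ (F n s n) Q (dir n (j-1)) - (if n = j then F n s 1 Q else 0) := by
      have h := IH n j hn1 le_rfl hj1 hj2 Q h0
      rw [show s + 1 - 1 = s by ring] at h
      exact h
    rw [hIHn, vA, if_neg (by omega : ¬ (1:ℕ) = j)]
    by_cases hnj : n = j
    · rw [if_pos hnj, if_pos hnj]
      field_simp
      ring1
    · rw [if_neg hnj, if_neg hnj]
      field_simp
      ring
  · have hi2' : 2 ≤ i := by omega
    have es : F n s i = fun Q =>
        F n (s+1) (i-1) Q - cf n (i-1) Q / cf n n Q * F n (s+1) n Q := by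
      have h := F_pred n hn s hs i hi2
      rw [h]; funext Q; simp [hi]
    have es1 : F n (s-1) i = fun Q =>
        F n s (i-1) Q - cf n (i-1) Q / cf n n Q * F n s n Q := by
      have h := F_pred n hn (s-1) (by omega) i hi2
      rw [show s - 1 + 1 = s by ring] at h
      rw [h]; funext Q; simp [hi]
    have hdiv : DifferentiableAt ℝ (fun Q : Fin n → ℝ => cf n (i-1) Q / cf n n Q) Q := by
      simp only [div_eq_mul_inv]
      exact (hdcf (i-1)).mul ((hdcf n).inv h0)
    have hcfi_j : fderiv ℝ (cf n (i-1)) Q (dir n j) = if i - 1 = j then 1 else 0 :=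
      fderiv_cf n (i-1) (by omega) (by omega) Q j (by omega) hj2
    have hcfi_j' : fderiv ℝ (cf n (i-1)) Q (dir n (j-1)) = if i - 1 = j - 1 then 1 else 0 :=
      fderiv_cf n (i-1) (by omega) (by omega) Q (j-1) (by omega) (by omega)
    rw [es, es1]
    rw [Dsub (hdF (s+1) (i-1)) (hdiv.fun_mul (hdF (s+1) n)),
      Dmul hdiv (hdF (s+1) n),
      Dsub (hdF s (i-1)) (hdiv.fun_mul (hdF s n)),
      Dmul hdiv (hdF s n),
      Ddiv (hdcf (i-1)) (hdcf n) h0,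
      Ddiv (hdcf (i-1)) (hdcf n) h0,
      hcfn_j, hcfn_j', hcfi_j, hcfi_j']
    have hIHn : fderiv ℝ (F n (s+1) n) Q (dir n j)
        = fderiv ℝ (F n s n) Q (dir n (j-1)) - (if n = j then F n s 1 Q else 0) := by
      have h := IH n j hn1 le_rfl hj1 hj2 Q h0
      rw [show s + 1 - 1 = s by ring] at h
      exact h
    have hIHi : fderiv ℝ (F n (s+1) (i-1)) Q (dir n j)
        = fderiv ℝ (F n s (i-1)) Q (dir n (j-1)) - (if i - 1 = j then F n s 1 Q else 0) := by
      have h := IH (i-1) j (by omega) (by omega) hj1 hj2 Q h0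
      rw [show s + 1 - 1 = s by ring] at h
      exact h
    have vB : F n (s-1) 1 Q = 0 - 1 / cf n n Q * F n s n Q := by rw [es1']
    rw [hIHn, hIHi, vA, vB]
    by_cases hij : i = j
    · simp only [if_pos hij, if_pos (show i - 1 = j - 1 by omega),
        if_neg (show ¬ i - 1 = j by omega)]
      by_cases hnj : n = j
      · simp only [if_pos hnj]
        field_simp
        ring1
      · simp only [if_neg hnj]
        field_simp
        ring1
    · simp only [if_neg hij, if_neg (show ¬ i - 1 = j - 1 by omega)]
      by_cases hij1 : i - 1 = j
      · simp only [if_pos hij1, if_neg (show ¬ n = j by omega)]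
        field_simp
        ring1
      · simp only [if_neg hij1]
        by_cases hnj : n = j
        · simp only [if_pos hnj]
          field_simp
          ring1
        · simp only [if_neg hnj]
          field_simp
          try ring1

lemma mainAll (n : ℕ) (hn : 2 ≤ n) (s : ℤ) : MainStmt n s := by
  rcases le_or_gt 1 s with h | h
  · have key : ∀ K : ℕ, MainStmt n (1 + K) := by
      intro K
      induction K with
      | zero => simpa using base1 n hn
      | succ K ih =>
        have e : (1:ℤ) + (K+1 : ℕ) = (1 + (K:ℤ)) + 1 := by push_cast; ring
        rw [e]
        exact stepPos n hn (1 + K) (by omega) ih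
    have := key (s - 1).toNat
    rwa [show (1:ℤ) + (s-1).toNat = s by omega] at this
  · have key : ∀ K : ℕ, MainStmt n (-(K:ℤ)) := by
      intro K
      induction K with
      | zero => simpa using base0 n hn
      | succ K ih =>
        apply stepNeg n hn _ (by omega)
        rwa [show ((K+1:ℕ):ℤ) = (K:ℤ)+1 by push_cast; ring, show (-((K:ℤ)+1) + 1) = -(K:ℤ) by ring]
    have := key (-s).toNat
    rwa [show -(((-s).toNat:ℤ)) = s by omega] at this

lemma chain (n : ℕ) (hn : 2 ≤ n) : ∀ (β : ℕ) (s : ℤ) (j : ℕ), β + 1 ≤ j → j ≤ n →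
    ∀ Q : Fin n → ℝ, cf n n Q ≠ 0 →
    fderiv ℝ (F n s 1) Q (dir n j) = fderiv ℝ (F n (s - β) 1) Q (dir n (j - β)) := by
  intro β
  induction β with
  | zero => intro s j h1 h2 Q h0; simp
  | succ β ih =>
    intro s j h1 h2 Q h0
    have h := mainAll n hn s 1 j (by omega) (by omega) (by omega) h2 Q h0
    rw [if_neg (by omega)] at h
    rw [h, sub_zero, ih (s-1) (j-1) (by omega) (by omega) Q h0,
      show s - 1 - (β:ℤ) = s - ((β+1:ℕ):ℤ) by push_cast; ring,
      show j - 1 - β = j - (β+1) by omega]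

lemma quadD (n : ℕ) (c : Fin n → Fin n → ℝ) (K : ℝ) (W v : Fin n → ℝ) :
    fderiv ℝ (fun V : Fin n → ℝ => (1/4 : ℝ) * ∑ a : Fin n, ∑ b : Fin n, c a b * V a * V b - K) W v
      = (1/4) * ∑ a : Fin n, ∑ b : Fin n, c a b * (v a * W b + W a * v b) := by
  have hab : ∀ a b : Fin n, HasFDerivAt (fun V : Fin n → ℝ => c a b * V a * V b)
      ((c a b * W a) • ContinuousLinearMap.proj (R := ℝ) (φ := fun _ : Fin n => ℝ) b
        + W b • ((c a b) • ContinuousLinearMap.proj (R := ℝ) (φ := fun _ : Fin n => ℝ) a)) W := by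
    intro a b
    have hp : ∀ t : Fin n, HasFDerivAt (fun V : Fin n → ℝ => V t)
        (ContinuousLinearMap.proj (R := ℝ) (φ := fun _ : Fin n => ℝ) t) W :=
      fun t => (ContinuousLinearMap.proj (R := ℝ) (φ := fun _ : Fin n => ℝ) t).hasFDerivAt
    exact ((hp a).const_mul (c a b)).mul (hp b)
  have hsum : HasFDerivAt
      (fun V : Fin n → ℝ => ∑ a : Fin n, ∑ b : Fin n, c a b * V a * V b)
      (∑ a : Fin n, ∑ b : Fin n,
        ((c a b * W a) • ContinuousLinearMap.proj (R := ℝ) (φ := fun _ : Fin n => ℝ) b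
        + W b • ((c a b) • ContinuousLinearMap.proj (R := ℝ) (φ := fun _ : Fin n => ℝ) a))) W :=
    HasFDerivAt.fun_sum (fun a _ => HasFDerivAt.fun_sum (fun b _ => hab a b))
  have htot := (hsum.const_mul (1/4 : ℝ)).sub_const K
  rw [htot.fderiv]
  simp only [ContinuousLinearMap.coe_smul', Pi.smul_apply, ContinuousLinearMap.coe_sum',
    Finset.sum_apply, ContinuousLinearMap.add_apply, ContinuousLinearMap.smul_apply,
    ContinuousLinearMap.proj_apply, smul_eq_mul]
  rw [Finset.mul_sum, Finset.mul_sum]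
  apply Finset.sum_congr rfl
  intro a _
  rw [Finset.mul_sum, Finset.mul_sum]
  apply Finset.sum_congr rfl
  intro b _
  ring

lemma collapse (n : ℕ) (c : Fin n → Fin n → ℝ) (W : Fin n → ℝ) (i : Fin n) :
    ∑ a : Fin n, ∑ b : Fin n,
        c a b * ((Pi.single i (1:ℝ) : Fin n → ℝ) a * W b + W a * (Pi.single i (1:ℝ) : Fin n → ℝ) b)
      = ∑ b : Fin n, c i b * W b + ∑ a : Fin n, c a i * W a := by
  have hs : ∀ a : Fin n, (Pi.single i (1:ℝ) : Fin n → ℝ) a = if a = i then 1 else 0 :=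
    fun a => Pi.single_apply i 1 a
  have h1 : ∑ a : Fin n, ∑ b : Fin n, (if a = i then c a b * W b else 0)
      = ∑ b : Fin n, c i b * W b := by
    rw [Finset.sum_comm]
    simp [Finset.sum_ite_eq']
  have h2 : ∑ a : Fin n, ∑ b : Fin n, (if b = i then c a b * W a else 0)
      = ∑ a : Fin n, c a i * W a := by
    simp [Finset.sum_ite_eq']
  calc ∑ a : Fin n, ∑ b : Fin n,
        c a b * ((Pi.single i (1:ℝ) : Fin n → ℝ) a * W b + W a * (Pi.single i (1:ℝ) : Fin n → ℝ) b)
      = ∑ a : Fin n, ∑ b : Fin n,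
          ((if a = i then c a b * W b else 0) + (if b = i then c a b * W a else 0)) := by
        apply Finset.sum_congr rfl; intro a _
        apply Finset.sum_congr rfl; intro b _
        rw [hs a, hs b]
        by_cases ha : a = i <;> by_cases hb : b = i <;> simp [ha, hb] <;> ring
    _ = ∑ b : Fin n, c i b * W b + ∑ a : Fin n, c a i * W a := by
        rw [← h1, ← h2, ← Finset.sum_add_distrib]
        apply Finset.sum_congr rfl; intro a _
        rw [Finset.sum_add_distrib]

lemma LagQ (n : ℕ) (hn : 1 ≤ n) (m k : ℤ) (ε : ℝ) (W Q v : Fin n → ℝ) (h0 : cf n n Q ≠ 0) :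
    fderiv ℝ (fun Q => Lag n m k ε Q W) Q v
      = (1/4) * (∑ a : Fin n, ∑ b : Fin n,
          fderiv ℝ (F n (2 * (n : ℤ) - m - (((a : ℕ) : ℤ) + 1) - (((b : ℕ) : ℤ) + 1)) 1) Q v
            * W a * W b)
        - ε / 4 * fderiv ℝ (F n k 1) Q v := by
  have hF' : ∀ (t : ℤ), HasFDerivAt (F n t 1) (fderiv ℝ (F n t 1) Q) Q :=
    fun t => (diffF' n hn t 1 Q h0).hasFDerivAt
  have hab : ∀ a b : Fin n, HasFDerivAt
      (fun Q : Fin n → ℝ =>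
        F n (2 * (n : ℤ) - m - (((a : ℕ) : ℤ) + 1) - (((b : ℕ) : ℤ) + 1)) 1 Q * W a * W b)
      ((W b) • ((W a) • fderiv ℝ
        (F n (2 * (n : ℤ) - m - (((a : ℕ) : ℤ) + 1) - (((b : ℕ) : ℤ) + 1)) 1) Q)) Q :=
    fun a b => ((hF' _).mul_const (W a)).mul_const (W b)
  have hsum := HasFDerivAt.fun_sum (u := (Finset.univ : Finset (Fin n)))
    (fun a _ => HasFDerivAt.fun_sum (u := (Finset.univ : Finset (Fin n))) (fun b _ => hab a b))
  have hk := (hF' k).const_mul (ε/4)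
  have htot := (hsum.const_mul (1/4:ℝ)).fun_sub hk
  have heq : (fun Q => Lag n m k ε Q W) = fun Q : Fin n → ℝ =>
      (1/4 : ℝ) * (∑ a : Fin n, ∑ b : Fin n,
        F n (2 * (n : ℤ) - m - (((a : ℕ) : ℤ) + 1) - (((b : ℕ) : ℤ) + 1)) 1 Q * W a * W b)
      - ε / 4 * F n k 1 Q := rfl
  rw [heq, htot.fderiv]
  simp only [ContinuousLinearMap.coe_sub', Pi.sub_apply, ContinuousLinearMap.coe_smul',
    Pi.smul_apply, ContinuousLinearMap.coe_sum', Finset.sum_apply, smul_eq_mul]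
  congr 1
  rw [Finset.mul_sum, Finset.mul_sum]
  apply Finset.sum_congr rfl
  intro a _
  rw [Finset.mul_sum, Finset.mul_sum]
  apply Finset.sum_congr rfl
  intro b _
  ring

lemma single_dir (n : ℕ) (i : Fin n) : (Pi.single i (1:ℝ) : Fin n → ℝ) = dir n ((i:ℕ)+1) := by
  have hlt := i.isLt
  funext t
  rw [Pi.single_apply]
  simp only [dir]
  by_cases h : t = i
  · have hv : (t : ℕ) = (i : ℕ) := by rw [h]
    rw [if_pos h, if_pos ⟨by omega, by omega, by omega⟩]
  · rw [if_neg h, if_neg]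
    intro hc
    exact h (Fin.ext (by omega))


theorem euler_lagrange_ladder_symmetry (n : ℕ) (hn : 1 ≤ n) (m k : ℤ) (ε : ℝ)
    (hε : ε = 1 ∨ ε = -1) (α : ℕ) (hα1 : 1 ≤ α) (hα2 : α ≤ n - 1)
    (q : ℝ → Fin n → ℝ) (hq : ContDiff ℝ (⊤ : ℕ∞) q)
    (hqn : ∀ x, q x ⟨n - 1, by omega⟩ ≠ 0) :
    (∀ i : Fin n, α ≤ (i : ℕ) → ∀ x : ℝ,
      EL n (Lag n m k ε) q i x =
        EL n (Lag n (m + (α : ℤ)) (k - (α : ℤ)) ε) q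
          ⟨(i : ℕ) - α, Nat.lt_of_le_of_lt (Nat.sub_le _ _) i.isLt⟩ x) ∧
    (∀ i : Fin n, (h : (i : ℕ) + 1 + α ≤ n) → ∀ x : ℝ,
      EL n (Lag n m k ε) q i x =
        EL n (Lag n (m - (α : ℤ)) (k + (α : ℤ)) ε) q ⟨(i : ℕ) + α, by omega⟩ x) := by
  have hn2 : 2 ≤ n := by omega
  have h0 : ∀ y : ℝ, cf n n (q y) ≠ 0 := fun y => by
    rw [cf_n_eq n (by omega) (q y)]; exact hqn y
  have key : ∀ (m k : ℤ) (i : Fin n), α ≤ (i : ℕ) → ∀ x : ℝ,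
      EL n (Lag n m k ε) q i x =
        EL n (Lag n (m + (α : ℤ)) (k - (α : ℤ)) ε) q
          ⟨(i : ℕ) - α, Nat.lt_of_le_of_lt (Nat.sub_le _ _) i.isLt⟩ x := by
    intro m k i hαi x
    set i' : Fin n := ⟨(i : ℕ) - α, Nat.lt_of_le_of_lt (Nat.sub_le _ _) i.isLt⟩ with hi'
    have hval : (i' : ℕ) = (i : ℕ) - α := rfl
    have hcast : ((i' : ℕ) : ℤ) = ((i : ℕ) : ℤ) - (α : ℤ) := by
      rw [hval]; omega
    have hlt := i.isLt
    unfold EL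
    congr 1
    · -- ∂L/∂q part
      rw [single_dir n i, single_dir n i', hval,
        LagQ n (by omega) m k ε (deriv q x) (q x) _ (h0 x),
        LagQ n (by omega) (m + (α:ℤ)) (k - (α:ℤ)) ε (deriv q x) (q x) _ (h0 x)]
      have hch : ∀ t : ℤ, fderiv ℝ (F n t 1) (q x) (dir n ((i:ℕ)+1))
          = fderiv ℝ (F n (t - (α:ℤ)) 1) (q x) (dir n ((i:ℕ) - α + 1)) := by
        intro t
        have h := chain n hn2 α t ((i:ℕ)+1) (by omega) (by omega) (q x) (h0 x)
        rw [show (i:ℕ) + 1 - α = (i:ℕ) - α + 1 by omega] at h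
        exact h
      congr 1
      · congr 1
        apply Finset.sum_congr rfl; intro a _
        apply Finset.sum_congr rfl; intro b _
        rw [hch, show 2 * (n:ℤ) - m - (((a:ℕ):ℤ)+1) - (((b:ℕ):ℤ)+1) - (α:ℤ)
          = 2 * (n:ℤ) - (m + (α:ℤ)) - (((a:ℕ):ℤ)+1) - (((b:ℕ):ℤ)+1) by ring]
      · rw [hch k]
    · -- d/dx ∂L/∂q_x part
      congr 1
      funext y
      rw [show (fun V => Lag n m k ε (q y) V) = (fun V : Fin n → ℝ =>
        (1/4:ℝ) * ∑ a : Fin n, ∑ b : Fin n,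
          F n (2 * (n:ℤ) - m - (((a:ℕ):ℤ)+1) - (((b:ℕ):ℤ)+1)) 1 (q y) * V a * V b
          - (ε/4 * F n k 1 (q y))) from rfl]
      rw [show (fun V => Lag n (m + (α:ℤ)) (k - (α:ℤ)) ε (q y) V) = (fun V : Fin n → ℝ =>
        (1/4:ℝ) * ∑ a : Fin n, ∑ b : Fin n,
          F n (2 * (n:ℤ) - (m + (α:ℤ)) - (((a:ℕ):ℤ)+1) - (((b:ℕ):ℤ)+1)) 1 (q y) * V a * V b
          - (ε/4 * F n (k - (α:ℤ)) 1 (q y))) from rfl]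
      rw [quadD, quadD, collapse, collapse]
      congr 1
      congr 1
      · apply Finset.sum_congr rfl; intro b _
        rw [show 2 * (n:ℤ) - (m + (α:ℤ)) - (((i':ℕ):ℤ)+1) - (((b:ℕ):ℤ)+1)
          = 2 * (n:ℤ) - m - (((i:ℕ):ℤ)+1) - (((b:ℕ):ℤ)+1) by rw [hcast]; ring]
      · apply Finset.sum_congr rfl; intro a _
        rw [show 2 * (n:ℤ) - (m + (α:ℤ)) - (((a:ℕ):ℤ)+1) - (((i':ℕ):ℤ)+1)
          = 2 * (n:ℤ) - m - (((a:ℕ):ℤ)+1) - (((i:ℕ):ℤ)+1) by rw [hcast]; ring]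
  constructor
  · exact key m k
  · intro i h x
    have h1 := key (m - (α:ℤ)) (k + (α:ℤ)) ⟨(i:ℕ)+α, by omega⟩ (by simp) x
    rw [show m - (α:ℤ) + (α:ℤ) = m by ring, show k + (α:ℤ) - (α:ℤ) = k by ring] at h1
    have h2 : (⟨((⟨(i:ℕ)+α, by omega⟩ : Fin n) : ℕ) - α,
        Nat.lt_of_le_of_lt (Nat.sub_le _ _) (Fin.isLt _)⟩ : Fin n) = i := by
      apply Fin.ext; simp
    rw [h2] at h1
    exact h1.symm
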